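/- Let Ψ ∈ ℂ^{N×n} have DFT-incoherence parameter γ, let A = (√N/√m) S Ψ ∈ ℂ^{m×n}, and let v ∈ ℂ^n have at most s nonzero entries. Then for every k ∈ {1,…,m} and every choice of sample points t̃_1,…,t̃_m ∈ ℝ, |(Av)_k| ≤ γ √s ‖v‖₂ / √m. -/

import Mathlib

open scoped BigOperators
open MeasureTheory Matrix

noncomputable section

/-- The complex exponential `e(x) = exp(2πix)`. -/
def ce (x : ℝ) : ℂ := Complex.exp (2 * Real.pi * Complex.I * x)

/-- Half-bandwidth `Ñ = (N-1)/2`. -/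
def Nt (N : ℕ) : ℤ := ((N : ℤ) - 1) / 2

/-- Uniform grid point `t_p = (p-1)/N - 1/2` (zero-based index). -/
def tg (N : ℕ) (p : Fin N) : ℝ := (p : ℝ) / N - 1 / 2

/-- Dirichlet interpolation matrix `S ∈ ℂ^{m×N}`. -/
def dirS (N m : ℕ) (tt : Fin m → ℝ) : Matrix (Fin m) (Fin N) ℂ :=
  fun k p => (N : ℂ)⁻¹ * ∑ u ∈ Finset.Icc (-(Nt N)) (Nt N), ce (u * (tg N p - tt k))

/-- Centered DFT matrix `F ∈ ℂ^{N×N}`. -/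
def dftF (N : ℕ) : Matrix (Fin N) (Fin N) ℂ :=
  fun p u => ((Real.sqrt N : ℂ))⁻¹ * ce (-(tg N p) * ((u : ℤ) - Nt N))

/-- DFT-incoherence parameter of `Ψ`. -/
def dftIncoh (N n : ℕ) (Ψ : Matrix (Fin N) (Fin n) ℂ) : ℝ :=
  ⨆ ℓ : Fin n, ∑ k : Fin N, ‖((dftF N)ᴴ * Ψ) k ℓ‖

/-- Euclidean norm on `ℂ^n`. -/
def norm2 {n : ℕ} (v : Fin n → ℂ) : ℝ := Real.sqrt (∑ i, ‖v i‖ ^ 2)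

/-- `ℓ₁` norm on `ℂ^n`. -/
def norm1 {n : ℕ} (v : Fin n → ℂ) : ℝ := ∑ i, ‖v i‖

/-- `v` has at most `s` nonzero entries. -/
def Sparse {n : ℕ} (s : ℕ) (v : Fin n → ℂ) : Prop :=
  (Finset.univ.filter fun i => v i ≠ 0).card ≤ s

/-- Error of the best `s`-sparse approximation of `g` in `ℓ₁`. -/
def sperr {n : ℕ} (s : ℕ) (g : Fin n → ℂ) : ℝ :=
  sInf {r : ℝ | ∃ h : Fin n → ℂ, Sparse s h ∧ r = norm1 (fun i => h i - g i)}

/-- The 1-periodic signal with Fourier coefficients `c`. -/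
def fcont (c : ℤ → ℂ) (x : ℝ) : ℂ := ∑' ℓ : ℤ, c ℓ * ce (ℓ * x)

/-- Tail `∑_{|ℓ|>Ñ} |c_ℓ|` of the Fourier coefficients. -/
def tailSum (N : ℕ) (c : ℤ → ℂ) : ℝ :=
  ∑' ℓ : ℤ, if Nt N < |ℓ| then ‖c ℓ‖ else 0

/-- The distribution `𝒟` satisfies the deviation model with parameter `θ`. -/
def DevModel (N m : ℕ) (𝒟 : Measure ℝ) (θ : ℝ) : Prop :=
  ∀ j : ℤ, j ≠ 0 → (|j| : ℝ) ≤ 2 * ((N : ℝ) - 1) / m →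
    (2 * N / m) * ‖∫ x, ce (((j * m : ℤ) : ℝ) * x) ∂𝒟‖ ≤ θ

/-- The random nonuniform sample points `t̃_k = (k-1)/m - 1/2 + Δ_k`. -/
def samplePts {Ω : Type*} (m : ℕ) (Δ : Fin m → Ω → ℝ) (ω : Ω) : Fin m → ℝ :=
  fun k => (k : ℝ) / m - 1 / 2 + Δ k ω

end


section SparseAux

lemma ce_abs' (x : ℝ) : ‖ce x‖ = 1 := by
  simp [ce, Complex.norm_exp]

lemma ce_add' (x y : ℝ) : ce (x + y) = ce x * ce y := by
  rw [ce, ce, ce, ← Complex.exp_add]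
  push_cast
  ring_nf

lemma ce_conj' (x : ℝ) : (starRingEnd ℂ) (ce x) = ce (-x) := by
  rw [ce, ce, ← Complex.exp_conj]
  congr 1
  simp only [_root_.map_mul, Complex.conj_I, Complex.conj_ofReal, map_ofNat]
  push_cast
  ring

lemma sum_Icc_eq' (N : ℕ) (hN : Odd N) (f : ℤ → ℂ) :
    ∑ u ∈ Finset.Icc (-(Nt N)) (Nt N), f u = ∑ u : Fin N, f ((u : ℤ) - Nt N) := by
  have hNt : (N : ℤ) = 2 * Nt N + 1 := by
    obtain ⟨t, ht⟩ := hN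
    subst ht
    simp only [Nt]
    push_cast
    omega
  have hset : Finset.Icc (-(Nt N)) (Nt N) =
      (Finset.range N).map ⟨fun u : ℕ => (u : ℤ) - Nt N, by intro a b h; simpa using h⟩ := by
    ext x
    simp only [Finset.mem_map, Finset.mem_range, Finset.mem_Icc, Function.Embedding.coeFn_mk]
    constructor
    · intro hx
      exact ⟨(x + Nt N).toNat, by omega, by show (((x + Nt N).toNat : ℕ) : ℤ) - Nt N = x; omega⟩
    · rintro ⟨u, hu, rfl⟩
      show -(Nt N) ≤ (u : ℤ) - Nt N ∧ (u : ℤ) - Nt N ≤ Nt N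
      omega
  rw [hset, Finset.sum_map]
  exact (Fin.sum_univ_eq_sum_range (fun u => f ((u : ℤ) - Nt N)) N).symm

lemma key_eq (N n : ℕ) (hN : Odd N) (hNpos : 0 < N) (Ψ : Matrix (Fin N) (Fin n) ℂ)
    (m : ℕ) (tt : Fin m → ℝ) (k : Fin m) (ℓ : Fin n) :
    (dirS N m tt * Ψ) k ℓ
      = ((Real.sqrt N : ℂ))⁻¹ *
          ∑ u : Fin N, ce (-(((u : ℤ) - Nt N) * tt k)) * ((dftF N)ᴴ * Ψ) u ℓ := by
  have hsq : ((Real.sqrt N : ℝ) : ℂ)⁻¹ * ((Real.sqrt N : ℝ) : ℂ)⁻¹ = ((N : ℝ) : ℂ)⁻¹ := by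
    rw [← mul_inv]
    norm_cast
    rw [Real.mul_self_sqrt (Nat.cast_nonneg N)]
  calc (dirS N m tt * Ψ) k ℓ
      = ∑ p : Fin N, ∑ u : Fin N,
          ((N : ℝ) : ℂ)⁻¹ * ce ((((u : ℤ) - Nt N) : ℝ) * (tg N p - tt k)) * Ψ p ℓ := by
        rw [Matrix.mul_apply]
        refine Finset.sum_congr rfl fun p _ => ?_
        rw [dirS, sum_Icc_eq' N hN, Finset.mul_sum, Finset.sum_mul]
        push_cast
        refine Finset.sum_congr rfl fun u _ => ?_
        ring
    _ = ∑ u : Fin N, ∑ p : Fin N,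
          ((N : ℝ) : ℂ)⁻¹ * ce ((((u : ℤ) - Nt N) : ℝ) * (tg N p - tt k)) * Ψ p ℓ :=
        Finset.sum_comm
    _ = ((Real.sqrt N : ℂ))⁻¹ *
          ∑ u : Fin N, ce (-(((u : ℤ) - Nt N) * tt k)) * ((dftF N)ᴴ * Ψ) u ℓ := by
        rw [Finset.mul_sum]
        refine Finset.sum_congr rfl fun u _ => ?_
        rw [Matrix.mul_apply, Finset.mul_sum, Finset.mul_sum]
        refine Finset.sum_congr rfl fun p _ => ?_
        simp only [Matrix.conjTranspose_apply, dftF, Complex.star_def, _root_.map_mul,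
          map_inv₀, Complex.conj_ofReal, ce_conj']
        have h1 : ce ((((u : ℤ) - Nt N) : ℝ) * (tg N p - tt k))
            = ce (-(((u : ℤ) - Nt N) * tt k)) * ce (-(-tg N p * (((u : ℤ) - Nt N) : ℝ))) := by
          rw [← ce_add']
          congr 1
          push_cast
          ring
        rw [h1, ← hsq]
        ring

lemma row_entry_bound (N n : ℕ) (hN : Odd N) (hNpos : 0 < N) (hn : 0 < n)
    (Ψ : Matrix (Fin N) (Fin n) ℂ)
    (m : ℕ) (tt : Fin m → ℝ) (k : Fin m) (ℓ : Fin n) :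
    ‖(dirS N m tt * Ψ) k ℓ‖ ≤ (Real.sqrt N)⁻¹ * dftIncoh N n Ψ := by
  have hsum : ∑ u : Fin N, ‖((dftF N)ᴴ * Ψ) u ℓ‖ ≤ dftIncoh N n Ψ :=
    le_ciSup (f := fun j : Fin n => ∑ u : Fin N, ‖((dftF N)ᴴ * Ψ) u j‖)
      (Set.Finite.bddAbove (Set.finite_range _)) ℓ
  rw [key_eq N n hN hNpos Ψ m tt k ℓ, norm_mul, norm_inv, Complex.norm_real,
    Real.norm_of_nonneg (Real.sqrt_nonneg _)]
  refine mul_le_mul_of_nonneg_left ?_ (by positivity)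
  calc ‖∑ u : Fin N, ce (-(((u : ℤ) - Nt N) * tt k)) * ((dftF N)ᴴ * Ψ) u ℓ‖
      ≤ ∑ u : Fin N, ‖ce (-(((u : ℤ) - Nt N) * tt k)) * ((dftF N)ᴴ * Ψ) u ℓ‖ :=
        norm_sum_le _ _
    _ = ∑ u : Fin N, ‖((dftF N)ᴴ * Ψ) u ℓ‖ := by
        refine Finset.sum_congr rfl fun u _ => ?_
        rw [norm_mul, ce_abs', one_mul]
    _ ≤ dftIncoh N n Ψ := hsum

lemma norm1_le_sqrt_sparse {n s : ℕ} (v : Fin n → ℂ) (hv : Sparse s v) :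
    norm1 v ≤ Real.sqrt s * norm2 v := by
  classical
  set T := Finset.univ.filter fun i => v i ≠ 0 with hT
  have h1 : norm1 v = ∑ i ∈ T, ‖v i‖ := by
    rw [norm1]
    refine (Finset.sum_subset (Finset.subset_univ T) ?_).symm
    intro i _ hi
    simp only [hT, Finset.mem_filter, Finset.mem_univ, true_and, not_not] at hi
    simp [hi]
  have h2 : (∑ i ∈ T, ‖v i‖) ^ 2 ≤ T.card * ∑ i ∈ T, ‖v i‖ ^ 2 :=
    sq_sum_le_card_mul_sum_sq
  have h3 : ∑ i ∈ T, ‖v i‖ ^ 2 ≤ ∑ i, ‖v i‖ ^ 2 :=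
    Finset.sum_le_sum_of_subset_of_nonneg (Finset.subset_univ _) (fun _ _ _ => by positivity)
  have h4 : (∑ i ∈ T, ‖v i‖) ^ 2 ≤ (s : ℝ) * ∑ i, ‖v i‖ ^ 2 := by
    refine h2.trans ?_
    have : (T.card : ℝ) ≤ (s : ℝ) := by exact_mod_cast hv
    refine mul_le_mul this h3 ?_ (Nat.cast_nonneg s)
    positivity
  rw [h1]
  have h5 : ∑ i ∈ T, ‖v i‖ = Real.sqrt ((∑ i ∈ T, ‖v i‖) ^ 2) := by
    rw [Real.sqrt_sq (Finset.sum_nonneg fun _ _ => norm_nonneg _)]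
  rw [h5, norm2, ← Real.sqrt_mul (Nat.cast_nonneg s)]
  exact Real.sqrt_le_sqrt h4

end SparseAux

/-- for `A = (√N/√m) S Ψ` and any `s`-sparse `v ∈ ℂ^n`,
`|(Av)_k| ≤ γ √s ‖v‖₂ / √m` for every `k` and every choice of sample points. -/
theorem sparse_row_inner_bound
    (N n m s : ℕ) (hN : Odd N) (hNpos : 0 < N) (hm : 0 < m) (hn : 0 < n)
    (Ψ : Matrix (Fin N) (Fin n) ℂ)
    (tt : Fin m → ℝ)
    (A : Matrix (Fin m) (Fin n) ℂ)
    (hA : A = ((Real.sqrt N : ℂ) / (Real.sqrt m : ℂ)) • (dirS N m tt * Ψ))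
    (v : Fin n → ℂ) (hv : Sparse s v) :
    ∀ k : Fin m,
      ‖A.mulVec v k‖ ≤
        dftIncoh N n Ψ * Real.sqrt s * norm2 v / Real.sqrt m := by
  intro k
  subst hA
  have hmpos : (0 : ℝ) < Real.sqrt m := Real.sqrt_pos.mpr (by exact_mod_cast hm)
  have hNposR : (0 : ℝ) < Real.sqrt N := Real.sqrt_pos.mpr (by exact_mod_cast hNpos)
  have hγ0 : 0 ≤ dftIncoh N n Ψ := by
    have := le_ciSup (Set.Finite.bddAbove (Set.finite_range
      (fun ℓ : Fin n => ∑ u : Fin N, ‖((dftF N)ᴴ * Ψ) u ℓ‖))) ⟨0, hn⟩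
    refine le_trans ?_ this
    positivity
  have hmv : (((((Real.sqrt N : ℂ)) / ((Real.sqrt m : ℂ))) • (dirS N m tt * Ψ)).mulVec v) k
      = ((Real.sqrt N : ℂ) / (Real.sqrt m : ℂ)) * ((dirS N m tt * Ψ).mulVec v k) := by
    simp [Matrix.mulVec, dotProduct, Finset.mul_sum, mul_assoc]
  rw [hmv, norm_mul, norm_div, Complex.norm_real, Complex.norm_real,
    Real.norm_of_nonneg (Real.sqrt_nonneg _), Real.norm_of_nonneg (Real.sqrt_nonneg _)]
  have hbound : ‖(dirS N m tt * Ψ).mulVec v k‖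
      ≤ (Real.sqrt N)⁻¹ * dftIncoh N n Ψ * norm1 v := by
    rw [Matrix.mulVec, dotProduct]
    calc ‖∑ ℓ, (dirS N m tt * Ψ) k ℓ * v ℓ‖
        ≤ ∑ ℓ, ‖(dirS N m tt * Ψ) k ℓ * v ℓ‖ := norm_sum_le _ _
      _ ≤ ∑ ℓ, (Real.sqrt N)⁻¹ * dftIncoh N n Ψ * ‖v ℓ‖ := by
          refine Finset.sum_le_sum fun ℓ _ => ?_
          rw [norm_mul]
          exact mul_le_mul_of_nonneg_right (row_entry_bound N n hN hNpos hn Ψ m tt k ℓ)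
            (norm_nonneg _)
      _ = (Real.sqrt N)⁻¹ * dftIncoh N n Ψ * norm1 v := by
          rw [norm1, Finset.mul_sum]
  calc Real.sqrt N / Real.sqrt m * ‖(dirS N m tt * Ψ).mulVec v k‖
      ≤ Real.sqrt N / Real.sqrt m * ((Real.sqrt N)⁻¹ * dftIncoh N n Ψ * norm1 v) :=
        mul_le_mul_of_nonneg_left hbound (by positivity)
    _ = dftIncoh N n Ψ * norm1 v / Real.sqrt m := by
        field_simp
    _ ≤ dftIncoh N n Ψ * (Real.sqrt s * norm2 v) / Real.sqrt m := by
        refine div_le_div_of_nonneg_right ?_ hmpos.le |>.trans_eq rfl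
        exact mul_le_mul_of_nonneg_left (norm1_le_sqrt_sparse v hv) hγ0
    _ = dftIncoh N n Ψ * Real.sqrt s * norm2 v / Real.sqrt m := by ring
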